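/- If three matrix norms ‖·‖ on m×n, n×p, m×p real matrices are mutually consistent (‖XY‖ ≤ ‖X‖‖Y‖), then their dual continuations ‖A_s + A_i ε‖ := ‖A_s‖ + D_{A_i}‖A_s‖ ε (with ‖A_i‖ε when A_s = 0) satisfy ‖AB‖ ≤ ‖A‖‖B‖ for all dual matrices A ∈ DR^{m×n}, B ∈ DR^{n×p}, in the lexicographic order on dual numbers. -/

import Mathlib

open Filter Topology

/-- A norm on a real vector space. -/
def IsNorm {α : Type*} [AddCommGroup α] [Module ℝ α] (N : α → ℝ) : Prop :=
  (∀ x y, N (x + y) ≤ N x + N y) ∧ (∀ (c : ℝ) (x : α), N (c • x) = |c| * N x) ∧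
    (∀ x, N x = 0 → x = 0)

/-- Lexicographic order on dual numbers represented as pairs. -/
def dualLe (p q : ℝ × ℝ) : Prop := p.1 < q.1 ∨ (p.1 = q.1 ∧ p.2 ≤ q.2)

/-- Product of dual numbers. -/
def dualMul (p q : ℝ × ℝ) : ℝ × ℝ := (p.1 * q.1, p.1 * q.2 + p.2 * q.1)

open Classical in
/-- Dual continuation of a matrix norm `N` with directional derivative `D`:
`‖A_s + A_i ε‖ = ‖A_s‖ + D_{A_i}‖A_s‖ ε`, and `‖A_i‖ε` when `A_s = 0`. -/
noncomputable def dualContinuation {α : Type*} [AddCommGroup α] [Module ℝ α]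
    (N : α → ℝ) (D : α → α → ℝ) (A : α × α) : ℝ × ℝ :=
  if A.1 = 0 then (0, N A.2) else (N A.1, D A.1 A.2)

lemma IsNorm.zero' {α : Type*} [AddCommGroup α] [Module ℝ α] {N : α → ℝ}
    (h : IsNorm N) : N 0 = 0 := by
  have := h.2.1 0 0
  simpa using this

lemma IsNorm.nonneg' {α : Type*} [AddCommGroup α] [Module ℝ α] {N : α → ℝ}
    (h : IsNorm N) (x : α) : 0 ≤ N x := by
  have h1 := h.1 x (-x)
  have h2 := h.2.1 (-1) x
  have h0 := h.zero'
  simp [neg_one_smul] at h2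
  rw [add_neg_cancel, h0] at h1
  linarith

lemma IsNorm.pos' {α : Type*} [AddCommGroup α] [Module ℝ α] {N : α → ℝ}
    (h : IsNorm N) {x : α} (hx : x ≠ 0) : 0 < N x := by
  rcases lt_or_eq_of_le (h.nonneg' x) with h' | h'
  · exact h'
  · exact absurd (h.2.2 x h'.symm) hx

lemma IsNorm.le_add' {α : Type*} [AddCommGroup α] [Module ℝ α] {N : α → ℝ}
    (h : IsNorm N) (x y : α) : N x ≤ N (x + y) + N y := by
  have h1 := h.1 (x + y) (-y)
  have h2 := h.2.1 (-1) y
  simp only [neg_one_smul, abs_neg, abs_one, one_mul] at h2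
  simpa [add_assoc, h2] using h1

/-- If three matrix norms (on `m×n`, `n×p`, `m×p` real matrices) are mutually
consistent, then their dual continuations satisfy `‖AB‖ ≤ ‖A‖‖B‖` for all dual
matrices `A`, `B` (dual product `AB = A_s B_s + (A_s B_i + A_i B_s)ε`), in the
lexicographic order on dual numbers. -/
theorem dual_matrix_norms_mutually_consistent {m n p : ℕ}
    (N1 : Matrix (Fin m) (Fin n) ℝ → ℝ) (N2 : Matrix (Fin n) (Fin p) ℝ → ℝ)
    (N3 : Matrix (Fin m) (Fin p) ℝ → ℝ)
    (hN1 : IsNorm N1) (hN2 : IsNorm N2) (hN3 : IsNorm N3)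
    (hcons : ∀ (X : Matrix (Fin m) (Fin n) ℝ) (Y : Matrix (Fin n) (Fin p) ℝ),
      N3 (X * Y) ≤ N1 X * N2 Y)
    (D1 : Matrix (Fin m) (Fin n) ℝ → Matrix (Fin m) (Fin n) ℝ → ℝ)
    (D2 : Matrix (Fin n) (Fin p) ℝ → Matrix (Fin n) (Fin p) ℝ → ℝ)
    (D3 : Matrix (Fin m) (Fin p) ℝ → Matrix (Fin m) (Fin p) ℝ → ℝ)
    (hD1 : ∀ X Y, Tendsto (fun t : ℝ => (N1 (X + t • Y) - N1 X) / t) (𝓝[>] 0)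
      (𝓝 (D1 X Y)))
    (hD2 : ∀ X Y, Tendsto (fun t : ℝ => (N2 (X + t • Y) - N2 X) / t) (𝓝[>] 0)
      (𝓝 (D2 X Y)))
    (hD3 : ∀ X Y, Tendsto (fun t : ℝ => (N3 (X + t • Y) - N3 X) / t) (𝓝[>] 0)
      (𝓝 (D3 X Y)))
    (As Ai : Matrix (Fin m) (Fin n) ℝ) (Bs Bi : Matrix (Fin n) (Fin p) ℝ) :
    dualLe (dualContinuation N3 D3 (As * Bs, As * Bi + Ai * Bs))
      (dualMul (dualContinuation N1 D1 (As, Ai)) (dualContinuation N2 D2 (Bs, Bi))) := by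
  by_cases hAs : As = 0
  · subst hAs
    by_cases hBs : Bs = 0
    · subst hBs
      simp [dualContinuation, dualMul, dualLe, hN3.zero']
    · simp [dualContinuation, dualMul, dualLe, hBs]
      exact hcons Ai Bs
  · by_cases hBs : Bs = 0
    · subst hBs
      simp [dualContinuation, dualMul, dualLe, hAs]
      exact hcons As Bi
    · by_cases hAB : As * Bs = 0
      · simp [dualContinuation, dualMul, dualLe, hAs, hBs, hAB]
        exact Or.inl (mul_pos (hN1.pos' hAs) (hN2.pos' hBs))
      · simp only [dualContinuation, dualMul, dualLe, if_neg hAB, if_neg hAs, if_neg hBs]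
        rcases lt_or_eq_of_le (hcons As Bs) with hlt | heq
        · exact Or.inl hlt
        · right
          refine ⟨heq, ?_⟩
          -- the hard case: compare directional derivatives via limits
          have ht0 : Tendsto (fun t : ℝ => t) (𝓝[>] (0:ℝ)) (𝓝 0) :=
            tendsto_id.mono_left nhdsWithin_le_nhds
          have hf : Tendsto (fun t : ℝ => N1 (As + t • Ai)) (𝓝[>] (0:ℝ)) (𝓝 (N1 As)) := by
            have h := ((hD1 As Ai).mul ht0).add tendsto_const_nhds (b := N1 As)
            rw [mul_zero, zero_add] at h
            refine h.congr' ?_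
            filter_upwards [self_mem_nhdsWithin] with t ht
            have ht' : t ≠ 0 := ne_of_gt ht
            field_simp
            ring
          have hR : Tendsto (fun t : ℝ =>
              N1 (As + t • Ai) * ((N2 (Bs + t • Bi) - N2 Bs) / t) +
              ((N1 (As + t • Ai) - N1 As) / t) * N2 Bs + t * N3 (Ai * Bi))
              (𝓝[>] (0:ℝ))
              (𝓝 (N1 As * D2 Bs Bi + D1 As Ai * N2 Bs + 0 * N3 (Ai * Bi))) :=
            ((hf.mul (hD2 Bs Bi)).add ((hD1 As Ai).mul tendsto_const_nhds)).add
              (ht0.mul tendsto_const_nhds)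
          rw [zero_mul, add_zero] at hR
          refine le_of_tendsto_of_tendsto (hD3 (As * Bs) (As * Bi + Ai * Bs)) hR ?_
          filter_upwards [self_mem_nhdsWithin] with t ht
          have ht' : (t:ℝ) ≠ 0 := ne_of_gt ht
          have hexp : (As + t • Ai) * (Bs + t • Bi) =
              As * Bs + t • (As * Bi + Ai * Bs) + (t * t) • (Ai * Bi) := by
            simp only [Matrix.add_mul, Matrix.mul_add, Matrix.smul_mul, Matrix.mul_smul,
              smul_smul, smul_add]
            abel
          have h1 : N3 (As * Bs + t • (As * Bi + Ai * Bs)) ≤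
              N1 (As + t • Ai) * N2 (Bs + t • Bi) + (t * t) * N3 (Ai * Bi) := by
            calc N3 (As * Bs + t • (As * Bi + Ai * Bs))
                ≤ N3 (As * Bs + t • (As * Bi + Ai * Bs) + (t * t) • (Ai * Bi))
                  + N3 ((t * t) • (Ai * Bi)) :=
                  hN3.le_add' _ _
              _ = N3 ((As + t • Ai) * (Bs + t • Bi)) + (t * t) * N3 (Ai * Bi) := by
                  rw [← hexp, hN3.2.1, abs_of_nonneg (mul_self_nonneg t)]
              _ ≤ N1 (As + t • Ai) * N2 (Bs + t • Bi) + (t * t) * N3 (Ai * Bi) := by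
                  have := hcons (As + t • Ai) (Bs + t • Bi)
                  linarith
          have h2 : (N3 (As * Bs + t • (As * Bi + Ai * Bs)) - N3 (As * Bs)) / t ≤
              (N1 (As + t • Ai) * N2 (Bs + t • Bi) + (t * t) * N3 (Ai * Bi)
                - N1 As * N2 Bs) / t := by
            rw [heq]
            gcongr
            exact (Set.mem_Ioi.mp ht).le
          refine h2.trans (le_of_eq ?_)
          field_simp
          ring
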